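/- Let a, b ∈ ℂ with a ≠ 0 and b ≠ 0. Then the polynomial X²·Y² + a·X + b·Y is irreducible in ℂ[X, Y]. -/

import Mathlib

open Polynomial in
private lemma key9 (a b : ℂ) (ha : a ≠ 0) (hb : b ≠ 0) :
    Irreducible (C (X ^ 2) * X ^ 2 + C (C a) * X + C (C b * X) : (Polynomial ℂ)[X]) := by
  set p : (Polynomial ℂ)[X] := C (X ^ 2) * X ^ 2 + C (C a) * X + C (C b * X) with hp
  have hc1 : p.coeff 1 = Polynomial.C a := by
    rw [hp]
    simp only [coeff_add, coeff_C_mul, coeff_X_pow, coeff_C, coeff_X_one]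
    norm_num
  have hprim : p.IsPrimitive := by
    intro r hr
    have hdvd : r ∣ p.coeff 1 := (C_dvd_iff_dvd_coeff r p).mp hr 1
    rw [hc1] at hdvd
    exact isUnit_of_dvd_unit hdvd (isUnit_C.mpr ha.isUnit)
  rw [hprim.irreducible_iff_irreducible_map_fraction_map (K := RatFunc ℂ)]
  set alg := algebraMap (Polynomial ℂ) (RatFunc ℂ) with halg
  have hinj : Function.Injective alg := IsFractionRing.injective _ _
  set U : RatFunc ℂ := alg X with hU
  set A : RatFunc ℂ := alg (Polynomial.C a) with hA
  set B : RatFunc ℂ := alg (Polynomial.C b) with hB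
  have hmap : p.map alg = C (U ^ 2) * X ^ 2 + C A * X + C (B * U) := by
    simp [hp, Polynomial.map_add, Polynomial.map_mul, Polynomial.map_pow, map_pow, map_mul]
    rfl
  have hU0 : U ≠ 0 := fun h => Polynomial.X_ne_zero (hinj (by simpa using h))
  have hU2 : U ^ 2 ≠ 0 := pow_ne_zero _ hU0
  rw [hmap]
  have hdeg : (C (U ^ 2) * X ^ 2 + C A * X + C (B * U)).natDegree = 2 :=
    natDegree_quadratic hU2
  rw [Polynomial.irreducible_iff_roots_eq_zero_of_degree_le_three (by omega) (by omega)]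
  have hq0 : (C (U ^ 2) * X ^ 2 + C A * X + C (B * U)) ≠ 0 := fun h => by
    rw [h, natDegree_zero] at hdeg
    exact two_ne_zero hdeg.symm
  refine Multiset.eq_zero_of_forall_notMem fun x hx => ?_
  rw [mem_roots hq0] at hx
  have heval : U ^ 2 * x ^ 2 + A * x + B * U = 0 := by
    simpa using hx
  set r : RatFunc ℂ := 2 * U ^ 2 * x + A with hr
  have hsq : r ^ 2 = A ^ 2 - 4 * B * U ^ 3 := by
    rw [hr]; linear_combination (4 * U ^ 2) * heval
  set s : Polynomial ℂ := Polynomial.C (a ^ 2) - Polynomial.C (4 * b) * X ^ 3 with hs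
  have hs' : s = Polynomial.C a ^ 2 - 4 * Polynomial.C b * Polynomial.X ^ 3 := by
    rw [hs, map_pow, map_mul, map_ofNat]
  have hsmap : alg s = r ^ 2 := by
    rw [hsq, hs']
    simp only [map_sub, map_mul, map_pow, map_ofNat]
    rfl
  have hs0 : s ≠ 0 := by
    intro h
    have h3 : s.coeff 3 = -(4 * b) := by
      rw [hs, coeff_sub, coeff_C_mul, coeff_X_pow, coeff_C]
      norm_num
    rw [h, Polynomial.coeff_zero] at h3
    exact hb (by simpa using h3.symm)
  have hr0 : r ≠ 0 := by
    intro h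
    rw [h] at hsmap
    exact hs0 (hinj (by simpa using hsmap))
  have h4b : (-(4 * b) : ℂ) ≠ 0 := by simpa using hb
  have hs'' : s = Polynomial.C (-(4 * b)) * Polynomial.X ^ 3 + Polynomial.C (a ^ 2) := by
    rw [hs, map_neg]; ring
  have hlt : (Polynomial.C (a ^ 2) : Polynomial ℂ).natDegree
      < (Polynomial.C (-(4 * b)) * Polynomial.X ^ 3 : Polynomial ℂ).natDegree := by
    rw [natDegree_C, natDegree_C_mul_X_pow 3 _ h4b]; omega
  have hdegs : s.natDegree = 3 := by
    rw [hs'', natDegree_add_eq_left_of_natDegree_lt hlt, natDegree_C_mul_X_pow 3 _ h4b]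
  have h1 : (alg s).intDegree = 3 := by
    rw [halg, RatFunc.intDegree_polynomial, hdegs]; norm_num
  have h2 : (r ^ 2).intDegree = 2 * r.intDegree := by
    rw [pow_two, RatFunc.intDegree_mul hr0 hr0]; ring
  rw [hsmap, h2] at h1
  omega

open MvPolynomial in
theorem stmt9 (a b : ℂ) (ha : a ≠ 0) (hb : b ≠ 0) :
    Irreducible ((X 0)^2 * (X 1)^2 + C a * X 0 + C b * X 1 :
      MvPolynomial (Fin 2) ℂ) := by
  have h1 : (1 : Fin 2) = (0 : Fin 1).succ := rfl
  have hstep1 : MvPolynomial.finSuccEquiv ℂ 1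
        ((X 0)^2 * (X 1)^2 + C a * X 0 + C b * X 1 : MvPolynomial (Fin 2) ℂ)
      = Polynomial.X ^ 2 * (Polynomial.C (X 0)) ^ 2
        + Polynomial.C (C a) * Polynomial.X
        + Polynomial.C (C b) * Polynomial.C (X 0) := by
    rw [h1, map_add, map_add, map_mul, map_mul, map_mul, map_pow, map_pow,
      MvPolynomial.finSuccEquiv_X_zero, MvPolynomial.finSuccEquiv_X_succ]
    congr 2
    · simp [MvPolynomial.finSuccEquiv_apply]
    · simp [MvPolynomial.finSuccEquiv_apply]
  set e2 : MvPolynomial (Fin 1) ℂ ≃+* Polynomial ℂ :=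
    ((MvPolynomial.renameEquiv ℂ (Equiv.equivPUnit.{1,1} (Fin 1))).trans
      (MvPolynomial.pUnitAlgEquiv ℂ)).toRingEquiv with he2
  have he2C : ∀ c : ℂ, e2 (C c) = Polynomial.C c := by
    intro c
    simp [he2, MvPolynomial.pUnitAlgEquiv]
  have he2X : e2 (X 0) = Polynomial.X := by
    simp [he2, MvPolynomial.pUnitAlgEquiv]
  apply (MulEquiv.irreducible_iff
    ((MvPolynomial.finSuccEquiv ℂ 1).toRingEquiv.trans (Polynomial.mapEquiv e2))).mp
  have hEf : ((MvPolynomial.finSuccEquiv ℂ 1).toRingEquiv.trans (Polynomial.mapEquiv e2))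
      ((X 0)^2 * (X 1)^2 + C a * X 0 + C b * X 1 : MvPolynomial (Fin 2) ℂ)
      = Polynomial.C (Polynomial.X ^ 2) * Polynomial.X ^ 2
        + Polynomial.C (Polynomial.C a) * Polynomial.X
        + Polynomial.C (Polynomial.C b * Polynomial.X) := by
    rw [RingEquiv.trans_apply]
    rw [show ((MvPolynomial.finSuccEquiv ℂ 1).toRingEquiv
      ((X 0)^2 * (X 1)^2 + C a * X 0 + C b * X 1 : MvPolynomial (Fin 2) ℂ) :
        Polynomial (MvPolynomial (Fin 1) ℂ)) = Polynomial.X ^ 2 * (Polynomial.C (X 0)) ^ 2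
        + Polynomial.C (C a) * Polynomial.X
        + Polynomial.C (C b) * Polynomial.C (X 0) from hstep1]
    rw [show (Polynomial.mapEquiv e2 : Polynomial (MvPolynomial (Fin 1) ℂ) ≃+*
        Polynomial (Polynomial ℂ)) = Polynomial.mapEquiv e2 from rfl]
    simp only [Polynomial.mapEquiv_apply, Polynomial.map_add, Polynomial.map_mul,
      Polynomial.map_pow, Polynomial.map_C, Polynomial.map_X, RingHom.coe_coe, RingEquiv.coe_toRingHom, he2C, he2X]
    rw [← Polynomial.C_pow, ← Polynomial.C_mul]
    ring
  rw [hEf]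
  exact key9 a b ha hb
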